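/- Let j ≥ 0, m ≥ 1 with 2m ≤ 2^j, and let v ∈ ℂ^{2^{j+1}} be a nonzero vector whose support S := {l : v_l ≠ 0} has at most 2m elements and is such that the residues l mod 2^j are pairwise distinct for l ∈ S. Then at least one of the first 2m oddly indexed entries of the discrete Fourier transform of v is nonzero: there exists k ∈ {0,…,2m−1} with v̂_{2k+1} ≠ 0. -/

import Mathlib

open scoped Classical

/-- `ω_M = e^{-2πi/M}`. -/
noncomputable def dftOmega (M : ℕ) : ℂ :=
  Complex.exp (-2 * Real.pi * Complex.I / M)

/-- Discrete Fourier transform of `y ∈ ℂ^M`: `ŷ_k = Σ_{l=0}^{M-1} ω_M^{kl} y_l`. -/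
noncomputable def dft (M : ℕ) (y : ℕ → ℂ) (k : ℕ) : ℂ :=
  ∑ l ∈ Finset.range M, dftOmega M ^ (k * l) * y l

lemma dftOmega_primitive (M : ℕ) (hM : M ≠ 0) : IsPrimitiveRoot (dftOmega M) M := by
  have h := (Complex.isPrimitiveRoot_exp M hM).inv
  rw [← Complex.exp_neg] at h
  rw [show dftOmega M = Complex.exp (-(2 * Real.pi * Complex.I / M)) by unfold dftOmega; ring]
  exact h

lemma vandermonde_zero {ι : Type*} (S : Finset ι) (x c : ι → ℂ)
    (hx : ∀ s ∈ S, ∀ t ∈ S, x s = x t → s = t)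
    (n : ℕ) (hcard : S.card ≤ n) (hn : 0 < n)
    (h : ∀ k < n, ∑ s ∈ S, c s * x s ^ k = 0) :
    ∀ s ∈ S, c s = 0 := by
  intro s0 hs0
  set p : Polynomial ℂ := ∏ s ∈ S.erase s0, (Polynomial.X - Polynomial.C (x s)) with hp
  have hdeg : p.natDegree < n := by
    have h1 : p.natDegree = (S.erase s0).card := by
      rw [hp, Polynomial.natDegree_prod]
      · simp [Polynomial.natDegree_X_sub_C]
      · intro i _; exact Polynomial.X_sub_C_ne_zero _
    have h2 : (S.erase s0).card < S.card := Finset.card_erase_lt_of_mem hs0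
    omega
  have key : ∑ s ∈ S, c s * p.eval (x s) = 0 := by
    have : ∀ s ∈ S, c s * p.eval (x s)
        = ∑ k ∈ Finset.range n, p.coeff k * (c s * x s ^ k) := by
      intro s _
      rw [Polynomial.eval_eq_sum_range' hdeg, Finset.mul_sum]
      exact Finset.sum_congr rfl fun k _ => by ring
    rw [Finset.sum_congr rfl this, Finset.sum_comm]
    rw [Finset.sum_eq_zero]
    intro k hk
    rw [← Finset.mul_sum, h k (Finset.mem_range.mp hk), mul_zero]
  have hsingle : ∑ s ∈ S, c s * p.eval (x s) = c s0 * p.eval (x s0) := by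
    apply Finset.sum_eq_single_of_mem s0 hs0
    intro s hs hne
    have : p.eval (x s) = 0 := by
      rw [hp, Polynomial.eval_prod]
      apply Finset.prod_eq_zero (Finset.mem_erase.mpr ⟨hne, hs⟩)
      simp
    rw [this, mul_zero]
  have hne : p.eval (x s0) ≠ 0 := by
    rw [hp, Polynomial.eval_prod]
    apply Finset.prod_ne_zero_iff.mpr
    intro s hs
    simp only [Polynomial.eval_sub, Polynomial.eval_X, Polynomial.eval_C, sub_ne_zero]
    intro heq
    exact (Finset.mem_erase.mp hs).1 (hx s0 hs0 s (Finset.mem_erase.mp hs).2 heq).symm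
  have := hsingle ▸ key
  exact (mul_eq_zero.mp this).resolve_right hne

theorem stmt_13 (j m : ℕ) (hm : 1 ≤ m) (hm2 : 2 * m ≤ 2 ^ j) (v : ℕ → ℂ)
    (hv_len : ∀ l, 2 ^ (j + 1) ≤ l → v l = 0)
    (hv_ne : ∃ l, l < 2 ^ (j + 1) ∧ v l ≠ 0)
    (hcard : ((Finset.range (2 ^ (j + 1))).filter (fun l => v l ≠ 0)).card ≤ 2 * m)
    (hres : ∀ l₁ l₂, l₁ < 2 ^ (j + 1) → l₂ < 2 ^ (j + 1) → v l₁ ≠ 0 → v l₂ ≠ 0 →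
      l₁ % 2 ^ j = l₂ % 2 ^ j → l₁ = l₂) :
    ∃ k, k < 2 * m ∧ dft (2 ^ (j + 1)) v (2 * k + 1) ≠ 0 := by
  by_contra hcon
  push_neg at hcon
  obtain ⟨l0, hl0, hvl0⟩ := hv_ne
  set M := 2 ^ (j + 1) with hM
  set ω := dftOmega M with hω
  have hωne : ω ≠ 0 := Complex.exp_ne_zero _
  set S := (Finset.range M).filter (fun l => v l ≠ 0) with hS
  have hl0S : l0 ∈ S := Finset.mem_filter.mpr ⟨Finset.mem_range.mpr hl0, hvl0⟩
  -- ω^2 = dftOmega (2^j)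
  have hsq : ω ^ 2 = dftOmega (2 ^ j) := by
    rw [hω, dftOmega, dftOmega, ← Complex.exp_nat_mul]
    congr 1
    have h2 : (M : ℂ) = 2 * (2 ^ j : ℕ) := by
      rw [hM]; push_cast [pow_succ]; ring
    have hne : ((2:ℕ)^j : ℂ) ≠ 0 := by norm_num
    rw [h2]; field_simp; ring
  have hprim : IsPrimitiveRoot (dftOmega (2 ^ j)) (2 ^ j) :=
    dftOmega_primitive _ (by positivity)
  -- injectivity of l ↦ ω^(2l) on S
  have hxinj : ∀ s ∈ S, ∀ t ∈ S, ω ^ (2 * s) = ω ^ (2 * t) → s = t := by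
    intro s hs t ht heq
    obtain ⟨hs1, hs2⟩ := Finset.mem_filter.mp hs
    obtain ⟨ht1, ht2⟩ := Finset.mem_filter.mp ht
    rw [pow_mul, pow_mul, hsq] at heq
    have hone : dftOmega (2 ^ j) ^ (2 ^ j) = 1 := hprim.pow_eq_one
    rw [pow_eq_pow_mod s hone, pow_eq_pow_mod t hone] at heq
    have hmod : s % 2 ^ j = t % 2 ^ j :=
      hprim.pow_inj (Nat.mod_lt _ (by positivity)) (Nat.mod_lt _ (by positivity)) heq
    exact hres s t (Finset.mem_range.mp hs1) (Finset.mem_range.mp ht1) hs2 ht2 hmod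
  -- rewrite dft as vandermonde sums
  have hdft : ∀ k, dft M v (2 * k + 1) = ∑ l ∈ S, (ω ^ l * v l) * (ω ^ (2 * l)) ^ k := by
    intro k
    rw [dft, hS]
    rw [Finset.sum_filter_of_ne (by intro l _ h hv; apply h; rw [hv]; ring)]
    apply Finset.sum_congr rfl
    intro l _
    have : dftOmega M ^ ((2 * k + 1) * l) = ω ^ l * (ω ^ (2 * l)) ^ k := by
      rw [← hω, ← pow_mul, ← pow_add]
      congr 1
      ring
    rw [this]
    ring
  have hall : ∀ s ∈ S, ω ^ s * v s = 0 := by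
    apply vandermonde_zero S (fun l => ω ^ (2 * l)) (fun l => ω ^ l * v l) hxinj (2 * m)
      hcard (by omega)
    intro k hk
    rw [← hdft k]
    exact hcon k hk
  have := hall l0 hl0S
  exact hvl0 ((mul_eq_zero.mp this).resolve_left (pow_ne_zero _ hωne))
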